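/- Let S = {x ∈ ℝ^d : A(x) ⪰ 0} be a spectrahedral cone with p ∈ relint S, and let Ā(x) be the compression of A(x) to the orthogonal complement of ker A(p). Then for every x in the linear hull of S, one has x ∈ S if and only if Ā(x) ⪰ 0; moreover Ā(p) ≻ 0. -/

import Mathlib

open Matrix

private lemma symm_dot {n : ℕ} {M : Matrix (Fin n) (Fin n) ℝ} (hM : M.IsSymm)
    (u v : Fin n → ℝ) : u ⬝ᵥ (M *ᵥ v) = (M *ᵥ u) ⬝ᵥ v := by
  rw [dotProduct_mulVec]
  congr 1
  rw [← Matrix.mulVec_transpose, hM.eq]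

private lemma vec_eq_zero {n : ℕ} {z : Fin n → ℝ} (h : ∀ u : Fin n → ℝ, u ⬝ᵥ z = 0) :
    z = 0 := by
  funext i
  simpa [single_dotProduct] using h (Pi.single i 1)

private lemma quad_compress {n m : ℕ} (B : Matrix (Fin n) (Fin n) ℝ)
    (M₀ : Matrix (Fin n) (Fin m) ℝ) (y : Fin m → ℝ) :
    y ⬝ᵥ ((M₀ᵀ * B * M₀) *ᵥ y) = (M₀ *ᵥ y) ⬝ᵥ (B *ᵥ (M₀ *ᵥ y)) := by
  rw [Matrix.mul_assoc, ← Matrix.mulVec_mulVec, ← Matrix.mulVec_mulVec,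
    Matrix.dotProduct_mulVec, Matrix.vecMul_transpose]

private lemma compress_isHermitian {n m : ℕ} {B : Matrix (Fin n) (Fin n) ℝ} (hB : B.IsSymm)
    (M₀ : Matrix (Fin n) (Fin m) ℝ) : (M₀ᵀ * B * M₀).IsHermitian := by
  rw [Matrix.IsHermitian, conjTranspose_eq_transpose_of_trivial, Matrix.transpose_mul,
    Matrix.transpose_mul, Matrix.transpose_transpose, hB.eq, Matrix.mul_assoc]

theorem compression_describes_spectrahedron_on_linear_hull {d n m : ℕ}
    (A : (Fin d → ℝ) →ₗ[ℝ] Matrix (Fin n) (Fin n) ℝ) (hA : ∀ x, (A x).IsSymm)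
    (S : Set (Fin d → ℝ)) (hS : S = {x | (A x).PosSemidef})
    (p : Fin d → ℝ) (hp : p ∈ intrinsicInterior ℝ S)
    (M₀ : Matrix (Fin n) (Fin m) ℝ)
    (horth : M₀ᵀ * M₀ = 1)
    (hrange : ∀ v : Fin n → ℝ,
      (∃ y : Fin m → ℝ, M₀ *ᵥ y = v) ↔ (∀ w : Fin n → ℝ, A p *ᵥ w = 0 → v ⬝ᵥ w = 0)) :
    (∀ x ∈ Submodule.span ℝ S, (x ∈ S ↔ (M₀ᵀ * A x * M₀).PosSemidef)) ∧
    (M₀ᵀ * A p * M₀).PosDef := by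
  have hpS : p ∈ S := intrinsicInterior_subset hp
  have hpPSD : (A p).PosSemidef := by rw [hS] at hpS; exact hpS
  -- Step 1: every s ∈ S has ker A p ⊆ ker A s
  have hker : ∀ s ∈ S, ∀ w : Fin n → ℝ, A p *ᵥ w = 0 → A s *ᵥ w = 0 := by
    intro s hs w hw
    obtain ⟨q, hq, hqp⟩ := mem_intrinsicInterior.mp hp
    have hpA : p ∈ affineSpan ℝ S := subset_affineSpan ℝ S hpS
    have hsA : s ∈ affineSpan ℝ S := subset_affineSpan ℝ S hs
    have hmem : ∀ t : ℝ, t • (s - p) + p ∈ affineSpan ℝ S := by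
      intro t
      have := (affineSpan ℝ S).smul_vsub_vadd_mem t hsA hpA hpA
      simpa [vsub_eq_sub, vadd_eq_add] using this
    set f : ℝ → affineSpan ℝ S := fun t => ⟨t • (s - p) + p, hmem t⟩ with hf
    have hfc : Continuous f :=
      Continuous.subtype_mk ((continuous_id.smul continuous_const).add continuous_const) _
    have hf0 : f 0 = q := by
      apply Subtype.ext
      simp [hf, hqp]
    have hnhds : f ⁻¹' interior ((↑) ⁻¹' S : Set (affineSpan ℝ S)) ∈ nhds (0 : ℝ) := by
      apply hfc.continuousAt.preimage_mem_nhds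
      exact isOpen_interior.mem_nhds (hf0 ▸ hq)
    obtain ⟨ε, hε, hball⟩ := Metric.mem_nhds_iff.mp hnhds
    have htmem : (-(ε/2)) ∈ Metric.ball (0:ℝ) ε := by
      simp only [Metric.mem_ball, Real.dist_eq, sub_zero, abs_neg, abs_of_pos (by linarith : (0:ℝ) < ε/2)]
      linarith
    have hfm : f (-(ε/2)) ∈ interior ((↑) ⁻¹' S : Set (affineSpan ℝ S)) := hball htmem
    have hgs0 : f (-(ε/2)) ∈ (Subtype.val ⁻¹' S : Set (affineSpan ℝ S)) :=
      interior_subset (s := (Subtype.val ⁻¹' S : Set (affineSpan ℝ S))) hfm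
    have hgs : (-(ε/2)) • (s - p) + p ∈ S := hgs0
    have hsPSD : (A s).PosSemidef := by rw [hS] at hs; exact hs
    have hgsPSD : (A ((-(ε/2)) • (s - p) + p)).PosSemidef := by rw [hS] at hgs; exact hgs
    have h1 : (0:ℝ) ≤ w ⬝ᵥ (A s *ᵥ w) := by simpa using hsPSD.dotProduct_mulVec_nonneg w
    have h2 : (0:ℝ) ≤ w ⬝ᵥ (A ((-(ε/2)) • (s - p) + p) *ᵥ w) := by simpa using hgsPSD.dotProduct_mulVec_nonneg w
    have hexp : w ⬝ᵥ (A ((-(ε/2)) • (s - p) + p) *ᵥ w) = (-(ε/2)) * (w ⬝ᵥ (A s *ᵥ w)) := by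
      have hAv : A ((-(ε/2)) • (s - p) + p) *ᵥ w = (-(ε/2)) • (A s *ᵥ w) := by
        simp [map_add, _root_.map_smul, map_sub, Matrix.add_mulVec, Matrix.sub_mulVec,
          Matrix.smul_mulVec, Matrix.neg_mulVec, hw, smul_sub]
      rw [hAv, dotProduct_smul, smul_eq_mul]
    have h3 : w ⬝ᵥ (A s *ᵥ w) = 0 := by
      rw [hexp] at h2
      nlinarith
    exact (hsPSD.dotProduct_mulVec_zero_iff w).mp (by simpa using h3)
  -- Step 2: extend to the span
  have hkerspan : ∀ x ∈ Submodule.span ℝ S, ∀ w : Fin n → ℝ, A p *ᵥ w = 0 → A x *ᵥ w = 0 := by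
    intro x hx
    induction hx using Submodule.span_induction with
    | mem s hs => exact hker s hs
    | zero => intro w _; simp
    | add a b _ _ ha hb => intro w hw; simp [map_add, Matrix.add_mulVec, ha w hw, hb w hw]
    | smul c a _ ha => intro w hw; simp [_root_.map_smul, Matrix.smul_mulVec, ha w hw]
  -- Step 3: M₀ᵀ kills ker A p
  have hMker : ∀ w : Fin n → ℝ, A p *ᵥ w = 0 → M₀ᵀ *ᵥ w = 0 := by
    intro w hw
    funext j
    have hcol : (∃ y : Fin m → ℝ, M₀ *ᵥ y = M₀ *ᵥ Pi.single j 1) := ⟨_, rfl⟩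
    have h := ((hrange _).mp hcol) w hw
    have key : (M₀ᵀ *ᵥ w) j = (M₀ *ᵥ Pi.single j 1) ⬝ᵥ w := by
      simp [Matrix.mulVec, dotProduct, Matrix.transpose_apply, Pi.single_apply,
        mul_comm]
    rw [Pi.zero_apply, key, h]
  -- Step 4: v - M₀ (M₀ᵀ v) ∈ ker A p
  have hproj : ∀ v : Fin n → ℝ, M₀ᵀ *ᵥ (v - M₀ *ᵥ (M₀ᵀ *ᵥ v)) = 0 := by
    intro v
    rw [Matrix.mulVec_sub, Matrix.mulVec_mulVec, Matrix.mulVec_mulVec, horth]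
    simp
  have hdecomp : ∀ v : Fin n → ℝ, A p *ᵥ (v - M₀ *ᵥ (M₀ᵀ *ᵥ v)) = 0 := by
    intro v
    apply vec_eq_zero
    intro u
    rw [symm_dot (hA p)]
    obtain ⟨y, hy⟩ : ∃ y : Fin m → ℝ, M₀ *ᵥ y = A p *ᵥ u := by
      apply (hrange _).mpr
      intro w hw
      rw [← symm_dot (hA p), hw, dotProduct_zero]
    rw [← hy, dotProduct_comm, Matrix.dotProduct_mulVec, ← Matrix.mulVec_transpose, hproj,
      zero_dotProduct]
  -- main statement
  constructor
  · intro x hx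
    constructor
    · intro hxS
      have hxPSD : (A x).PosSemidef := by rw [hS] at hxS; exact hxS
      refine PosSemidef.of_dotProduct_mulVec_nonneg (compress_isHermitian (hA x) M₀) fun y => ?_
      simp only [star_trivial]
      rw [quad_compress]
      simpa using hxPSD.dotProduct_mulVec_nonneg (M₀ *ᵥ y)
    · intro hC
      rw [hS]
      refine PosSemidef.of_dotProduct_mulVec_nonneg (by rw [Matrix.IsHermitian, conjTranspose_eq_transpose_of_trivial]; exact (hA x).eq)
        fun v => ?_
      simp only [star_trivial]
      set z : Fin n → ℝ := v - M₀ *ᵥ (M₀ᵀ *ᵥ v) with hz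
      set w : Fin n → ℝ := M₀ *ᵥ (M₀ᵀ *ᵥ v) with hwdef
      have hv : v = w + z := by simp [hz, hwdef]
      have hAz : A x *ᵥ z = 0 := hkerspan x hx z (hdecomp v)
      have : v ⬝ᵥ (A x *ᵥ v) = (M₀ᵀ *ᵥ v) ⬝ᵥ ((M₀ᵀ * A x * M₀) *ᵥ (M₀ᵀ *ᵥ v)) := by
        rw [quad_compress]
        calc v ⬝ᵥ (A x *ᵥ v) = (w + z) ⬝ᵥ (A x *ᵥ (w + z)) := by rw [← hv]
          _ = w ⬝ᵥ (A x *ᵥ w) + w ⬝ᵥ (A x *ᵥ z) + (z ⬝ᵥ (A x *ᵥ w) + z ⬝ᵥ (A x *ᵥ z)) := by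
              rw [Matrix.mulVec_add, add_dotProduct, dotProduct_add, dotProduct_add]
          _ = w ⬝ᵥ (A x *ᵥ w) := by
              rw [hAz, symm_dot (hA x) z w, hAz]
              simp
      rw [this]
      simpa using hC.dotProduct_mulVec_nonneg (M₀ᵀ *ᵥ v)
  · refine PosDef.of_dotProduct_mulVec_pos (compress_isHermitian (hA p) M₀) fun y hy => ?_
    simp only [star_trivial]
    rw [quad_compress]
    have hge : (0:ℝ) ≤ (M₀ *ᵥ y) ⬝ᵥ (A p *ᵥ (M₀ *ᵥ y)) := by simpa using hpPSD.dotProduct_mulVec_nonneg (M₀ *ᵥ y)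
    rcases lt_or_eq_of_le hge with h | h
    · exact h
    · exfalso
      have h0 : A p *ᵥ (M₀ *ᵥ y) = 0 :=
        (hpPSD.dotProduct_mulVec_zero_iff (M₀ *ᵥ y)).mp (by simpa using h.symm)
      have := hMker _ h0
      rw [Matrix.mulVec_mulVec, horth, Matrix.one_mulVec] at this
      exact hy this
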